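/- Let G be a finite non-cyclic abelian group. Then the following are equivalent: (a) G is isomorphic to ℤ/pℤ × ℤ/pℤ for some prime p; (b) the intersection graph of subgroups I(G) is triangle-free (has no 3-clique); (c) I(G) is acyclic (contains no cycle); (d) I(G) is bipartite (2-colorable). -/

import Mathlib

open SimpleGraph

/-- The intersection graph of subgroups of a group `G`: vertices are the
nontrivial proper subgroups of `G`, and two distinct vertices are adjacent
iff the corresponding subgroups have nontrivial intersection. -/
def interGraph (G : Type*) [Group G] :
    SimpleGraph {H : Subgroup G // H ≠ ⊥ ∧ H ≠ ⊤} where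
  Adj H K := H ≠ K ∧ H.1 ⊓ K.1 ≠ ⊥
  symm := by
    constructor
    rintro H K ⟨hne, hint⟩
    exact ⟨hne.symm, by rwa [inf_comm] at hint⟩
  loopless := by
    constructor
    rintro H ⟨hne, _⟩
    exact hne rfl

namespace InterGraphAux

open Subgroup

variable {G : Type*} [CommGroup G] [Finite G]

/-- The `n`-torsion subgroup of a commutative group. -/
def tors (G : Type*) [CommGroup G] (n : ℕ) : Subgroup G :=
  (powMonoidHom n : G →* G).ker

lemma mem_tors {n : ℕ} {x : G} : x ∈ tors G n ↔ x ^ n = 1 := Iff.rfl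

lemma card_tors_le (hass : ∀ p : ℕ, p.Prime → Nat.card (tors G p) ≤ p) :
    ∀ n : ℕ, 0 < n → Nat.card (tors G n) ≤ n := by
  intro n
  induction n using Nat.strong_induction_on with
  | _ n ih =>
    intro hn
    rcases eq_or_lt_of_le (show 1 ≤ n from hn) with h1 | h2
    · -- n = 1
      have h1' : n = 1 := h1.symm
      subst h1'
      have hbot : tors G 1 = ⊥ := by
        ext x
        simp [mem_tors, Subgroup.mem_bot]
      rw [hbot]
      simp
    · -- n ≥ 2
      set q := n.minFac with hq
      have hq_prime : q.Prime := Nat.minFac_prime (by omega)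
      have hq_dvd : q ∣ n := Nat.minFac_dvd n
      set m := n / q with hm
      have hmq : m * q = n := Nat.div_mul_cancel hq_dvd
      have hm_pos : 0 < m :=
        Nat.div_pos (Nat.le_of_dvd (by omega) hq_dvd) hq_prime.pos
      have hm_lt : m < n := Nat.div_lt_self (by omega) hq_prime.one_lt
      -- the q-th power map on tors G n
      let φ : ↥(tors G n) →* G := (powMonoidHom q).comp (tors G n).subtype
      have hcard : Nat.card ↥(tors G n)
          = Nat.card (↥(tors G n) ⧸ φ.ker) * Nat.card φ.ker :=
        Subgroup.card_eq_card_quotient_mul_card_subgroup φ.ker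
      have hquot : Nat.card (↥(tors G n) ⧸ φ.ker) = Nat.card φ.range :=
        Nat.card_congr (QuotientGroup.quotientKerEquivRange φ).toEquiv
      have hrange_le : Nat.card φ.range ≤ Nat.card (tors G m) := by
        have hinj : Function.Injective
            (fun y : φ.range => (⟨(y : G), by
              obtain ⟨⟨x, hxmem⟩, hx⟩ := y.2
              have hx' : x ^ q = (y : G) := by
                simpa [φ, powMonoidHom] using hx
              rw [mem_tors, ← hx', ← pow_mul,
                show q * m = n by rw [mul_comm]; exact hmq]
              exact mem_tors.1 hxmem⟩ : ↥(tors G m))) := by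
          intro y₁ y₂ hy
          apply Subtype.ext
          simpa using congrArg Subtype.val hy
        exact Nat.card_le_card_of_injective _ hinj
      have hker_le : Nat.card φ.ker ≤ Nat.card (tors G q) := by
        have hinj : Function.Injective
            (fun y : φ.ker => (⟨((y : ↥(tors G n)) : G), by
              have hy2 : φ (y : ↥(tors G n)) = 1 := y.2
              rw [mem_tors]
              simpa [φ, powMonoidHom] using hy2⟩ : ↥(tors G q))) := by
          intro y₁ y₂ hy
          apply Subtype.ext
          apply Subtype.ext
          simpa using congrArg Subtype.val hy
        exact Nat.card_le_card_of_injective _ hinj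
      calc Nat.card ↥(tors G n)
          = Nat.card (↥(tors G n) ⧸ φ.ker) * Nat.card φ.ker := hcard
        _ = Nat.card φ.range * Nat.card φ.ker := by rw [hquot]
        _ ≤ Nat.card (tors G m) * Nat.card (tors G q) :=
            Nat.mul_le_mul hrange_le hker_le
        _ ≤ m * q := Nat.mul_le_mul (ih m hm_lt hm_pos) (hass q hq_prime)
        _ = n := hmq

lemma exists_big_prime_torsion (h : ¬ IsCyclic G) :
    ∃ p : ℕ, p.Prime ∧ p < Nat.card (tors G p) := by
  by_contra hcon
  push_neg at hcon
  apply h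
  have := Fintype.ofFinite G
  classical
  apply isCyclic_of_card_pow_eq_one_le
  intro n hn
  have hfin : (Finset.univ.filter fun a : G => a ^ n = 1).card
      = Nat.card (tors G n) := by
    rw [Nat.card_eq_fintype_card, ← Fintype.card_subtype]
    exact (Fintype.card_congr (Equiv.subtypeEquivRight fun x =>
      (mem_tors (n := n) (x := x)).symm)).symm
  rw [hfin]
  exact card_tors_le (fun p hp => hcon p hp) n hn

lemma exists_two_prime_elements (h : ¬ IsCyclic G) :
    ∃ (p : ℕ) (a b : G), p.Prime ∧ orderOf a = p ∧ orderOf b = p ∧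
      b ∉ zpowers a := by
  obtain ⟨p, hp, hlt⟩ := exists_big_prime_torsion h
  have hp2 := hp.one_lt
  have h2 : 1 < Nat.card (tors G p) := by omega
  have hex : ∃ a : G, a ∈ tors G p ∧ a ≠ 1 := by
    by_contra hcon
    push_neg at hcon
    have : tors G p = ⊥ := (Subgroup.eq_bot_iff_forall _).2 hcon
    rw [Subgroup.eq_bot_iff_card] at this
    omega
  obtain ⟨a, ha_mem, ha_ne⟩ := hex
  have horder : ∀ c : G, c ∈ tors G p → c ≠ 1 → orderOf c = p := by
    intro c hc hc1
    have hdvd : orderOf c ∣ p := orderOf_dvd_of_pow_eq_one (mem_tors.1 hc)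
    rcases (Nat.dvd_prime hp).1 hdvd with h1 | h1
    · exact absurd (orderOf_eq_one_iff.1 h1) hc1
    · exact h1
  have ha : orderOf a = p := horder a ha_mem ha_ne
  have hexb : ∃ b ∈ tors G p, b ∉ zpowers a := by
    by_contra hcon
    push_neg at hcon
    have hle : tors G p ≤ zpowers a := hcon
    have := Subgroup.card_le_of_le hle
    rw [Nat.card_zpowers, ha] at this
    omega
  obtain ⟨b, hb_mem, hb⟩ := hexb
  have hb1 : b ≠ 1 := fun h1 => hb (h1 ▸ (zpowers a).one_mem)
  exact ⟨p, a, b, hp, ha, horder b hb_mem hb1, hb⟩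

lemma disj_of_prime_not_mem {p : ℕ} {a b : G} (hp : p.Prime)
    (ha : orderOf a = p) (hb : orderOf b = p) (hba : b ∉ zpowers a) :
    zpowers a ⊓ zpowers b = ⊥ := by
  by_contra hne
  have hdvd : Nat.card ↥(zpowers a ⊓ zpowers b) ∣ p := by
    have := Subgroup.card_dvd_of_le (inf_le_right : zpowers a ⊓ zpowers b ≤ zpowers b)
    rwa [Nat.card_zpowers, hb] at this
  rcases (Nat.dvd_prime hp).1 hdvd with h1 | h1
  · exact hne ((Subgroup.eq_bot_iff_card _).2 h1)
  · have heq : zpowers a ⊓ zpowers b = zpowers b := by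
      apply Subgroup.eq_of_le_of_card_ge inf_le_right
      rw [Nat.card_zpowers, hb, h1]
    have hmem : b ∈ zpowers a := by
      have hle : zpowers b ≤ zpowers a := by
        rw [← heq]; exact inf_le_left
      exact hle (mem_zpowers b)
    exact hba hmem

/-- The multiplication hom `A × B →* G`. -/
def mulHom (A B : Subgroup G) : (A × B) →* G :=
  (A.subtype).coprod (B.subtype)

lemma mulHom_inj {A B : Subgroup G} (hd : A ⊓ B = ⊥) :
    Function.Injective (mulHom A B) := by
  rw [injective_iff_map_eq_one]
  rintro ⟨⟨x, hx⟩, ⟨y, hy⟩⟩ hxy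
  have hxy' : x * y = 1 := hxy
  have hxB : x ∈ B := by
    have hxi : x = y⁻¹ := eq_inv_of_mul_eq_one_left hxy'
    rw [hxi]; exact inv_mem hy
  have hx_bot : x ∈ A ⊓ B := ⟨hx, hxB⟩
  rw [hd, Subgroup.mem_bot] at hx_bot
  subst hx_bot
  have hy1 : y = 1 := by simpa using hxy'
  subst hy1
  rfl

lemma mulHom_surj {A B : Subgroup G} (ht : A ⊔ B = ⊤) :
    Function.Surjective (mulHom A B) := by
  intro g
  have hg : g ∈ A ⊔ B := ht ▸ Subgroup.mem_top g
  rw [Subgroup.mem_sup] at hg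
  obtain ⟨y, hy, z, hz, hyz⟩ := hg
  exact ⟨(⟨y, hy⟩, ⟨z, hz⟩), hyz⟩

lemma card_sup_of_disjoint {A B : Subgroup G} (hd : A ⊓ B = ⊥) :
    Nat.card ↥(A ⊔ B) = Nat.card A * Nat.card B := by
  have hinj : Function.Injective (mulHom A B) := mulHom_inj hd
  have hrange : (mulHom A B).range = A ⊔ B := by
    apply le_antisymm
    · rintro g ⟨⟨⟨x, hx⟩, ⟨y, hy⟩⟩, rfl⟩
      exact mul_mem (Subgroup.mem_sup_left hx) (Subgroup.mem_sup_right hy)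
    · rw [sup_le_iff]
      constructor
      · intro x hx
        exact ⟨(⟨x, hx⟩, 1), mul_one x⟩
      · intro y hy
        exact ⟨(1, ⟨y, hy⟩), one_mul y⟩
  have hcard : Nat.card ↥(A ⊔ B) = Nat.card (↥A × ↥B) := by
    rw [← hrange]
    exact (Nat.card_congr (Equiv.ofInjective _ hinj)).symm
  rw [hcard, Nat.card_prod]

/-- If `A ⊓ B = ⊥` and `A ⊔ B = ⊤`, then `A × B ≃* G`. -/
noncomputable def isoProd {A B : Subgroup G} (hd : A ⊓ B = ⊥) (ht : A ⊔ B = ⊤) :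
    (↥A × ↥B) ≃* G :=
  MulEquiv.ofBijective (mulHom A B) ⟨mulHom_inj hd, mulHom_surj ht⟩

lemma card_mult_zmod (p : ℕ) [Fact p.Prime] :
    Nat.card (Multiplicative (ZMod p)) = p :=
  (Nat.card_congr (Multiplicative.ofAdd (α := ZMod p)).symm).trans (Nat.card_zmod p)

/-- If `G` is generated by two disjoint subgroups of order `p`, then
`G ≃* ZMod p × ZMod p`. -/
noncomputable def isoZModProd {p : ℕ} [Fact p.Prime] {A B : Subgroup G}
    (hA : Nat.card A = p) (hB : Nat.card B = p)
    (hd : A ⊓ B = ⊥) (ht : A ⊔ B = ⊤) :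
    G ≃* Multiplicative (ZMod p) × Multiplicative (ZMod p) :=
  (isoProd hd ht).symm.trans
    (MulEquiv.prodCongr
      (mulEquivOfPrimeCardEq hA (card_mult_zmod p))
      (mulEquivOfPrimeCardEq hB (card_mult_zmod p)))

/-- In a cyclic group, two elements of order `p` generate the same subgroup. -/
lemma mem_zpowers_of_orderOf_eq {p : ℕ} {x a b : G} (hp : p.Prime)
    (ha : orderOf a = p) (hb : orderOf b = p)
    (hax : a ∈ zpowers x) (hbx : b ∈ zpowers x) :
    b ∈ zpowers a := by
  have hd_pos : 0 < orderOf x := orderOf_pos x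
  have hpd : p ∣ orderOf x := by
    have hdvd := Subgroup.orderOf_dvd_natCard (zpowers x) hax
    rwa [Nat.card_zpowers, ha] at hdvd
  set c := x ^ (orderOf x / p) with hc
  have hc_ord : orderOf c = p := by
    rw [hc, orderOf_pow, Nat.gcd_eq_right (Nat.div_dvd_of_dvd hpd)]
    exact Nat.div_div_self hpd (by omega)
  have key : ∀ y : G, y ∈ zpowers x → orderOf y = p → y ∈ zpowers c := by
    intro y hy hyp
    obtain ⟨k, hyk⟩ := (isOfFinOrder_of_finite x).mem_powers_iff_mem_zpowers.2 hy
    have hyk' : x ^ k = y := hyk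
    have hxkp : x ^ (k * p) = 1 := by
      rw [pow_mul, hyk', ← hyp]
      exact pow_orderOf_eq_one y
    have hdkp : orderOf x ∣ k * p := orderOf_dvd_of_pow_eq_one hxkp
    have hdiv : (orderOf x / p) ∣ k := by
      have h1 : (orderOf x / p) * p = orderOf x := Nat.div_mul_cancel hpd
      have h2 : (orderOf x / p) * p ∣ k * p := by rw [h1]; exact hdkp
      exact (Nat.mul_dvd_mul_iff_right hp.pos).1 h2
    obtain ⟨t, ht⟩ := hdiv
    refine mem_zpowers_iff.2 ⟨(t : ℤ), ?_⟩
    rw [zpow_natCast, hc, ← pow_mul, ← ht, hyk']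
  have haC : a ∈ zpowers c := key a hax ha
  have hbC : b ∈ zpowers c := key b hbx hb
  have heq : zpowers a = zpowers c := by
    apply Subgroup.eq_of_le_of_card_ge (zpowers_le.2 haC)
    rw [Nat.card_zpowers, Nat.card_zpowers, ha, hc_ord]
  rw [heq]
  exact hbC

end InterGraphAux

set_option maxHeartbeats 2000000 in
open InterGraphAux Subgroup in
theorem intersectionGraph_tfae_of_noncyclic_abelian
    (G : Type*) [CommGroup G] [Finite G] (h : ¬ IsCyclic G) :
    [(∃ p : ℕ, p.Prime ∧
        Nonempty (G ≃* Multiplicative (ZMod p) × Multiplicative (ZMod p))),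
     (interGraph G).CliqueFree 3,
     (interGraph G).IsAcyclic,
     (interGraph G).Colorable 2].TFAE := by
  classical
  -- if G ≃ ZMod p × ZMod p, then the intersection graph has no edges
  have no_edges : (∃ p : ℕ, p.Prime ∧
      Nonempty (G ≃* Multiplicative (ZMod p) × Multiplicative (ZMod p))) →
      ∀ u v, ¬ (interGraph G).Adj u v := by
    rintro ⟨p, hp, ⟨e⟩⟩ u v ⟨hne, hint⟩
    have hpf : Fact p.Prime := ⟨hp⟩
    have hcard : Nat.card G = p ^ 2 := by
      rw [Nat.card_congr e.toEquiv, Nat.card_prod, card_mult_zmod, sq]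
    have hsub : ∀ H : Subgroup G, H ≠ ⊥ → H ≠ ⊤ → Nat.card H = p := by
      intro H hHb hHt
      have hdvd : Nat.card H ∣ p ^ 2 := hcard ▸ Subgroup.card_subgroup_dvd_card H
      obtain ⟨i, hi, hieq⟩ := (Nat.dvd_prime_pow hp).1 hdvd
      interval_cases i
      · exact absurd ((Subgroup.eq_bot_iff_card _).2 (by simpa using hieq)) hHb
      · simpa using hieq
      · exact absurd ((Subgroup.card_eq_iff_eq_top _).1 (by rw [hieq, hcard])) hHt
    have hu : Nat.card u.1 = p := hsub u.1 u.2.1 u.2.2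
    have hv : Nat.card v.1 = p := hsub v.1 v.2.1 v.2.2
    have hdvd : Nat.card ↥(u.1 ⊓ v.1) ∣ p :=
      hu ▸ Subgroup.card_dvd_of_le inf_le_left
    rcases (Nat.dvd_prime hp).1 hdvd with h1 | h1
    · exact hint ((Subgroup.eq_bot_iff_card _).2 h1)
    · have h2 : u.1 ⊓ v.1 = u.1 :=
        Subgroup.eq_of_le_of_card_ge inf_le_left (by rw [hu, h1])
      have h3 : u.1 ≤ v.1 := by rw [← h2]; exact inf_le_right
      have h4 : u.1 = v.1 :=
        Subgroup.eq_of_le_of_card_ge h3 (by rw [hu, hv])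
      exact hne (Subtype.ext h4)
  tfae_have 1 → 2 := by
    intro h1 s hs
    obtain ⟨a, b, c, hab, -, -, -⟩ := SimpleGraph.is3Clique_iff.1 hs
    exact no_edges h1 a b hab
  tfae_have 1 → 3 := by
    intro h1 v w hw
    cases w with
    | nil => exact hw.ne_nil rfl
    | cons ha q => exact no_edges h1 _ _ ha
  tfae_have 1 → 4 := by
    intro h1
    exact ⟨SimpleGraph.Coloring.mk (fun _ => (0 : Fin 2))
      (fun {a b} hadj => absurd hadj (no_edges h1 a b))⟩
  tfae_have 3 → 2 := by
    intro hac t ht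
    obtain ⟨u, w, hc, -⟩ :=
      SimpleGraph.is3Clique_iff_exists_cycle_length_three.1 ⟨t, ht⟩
    exact hac w hc
  tfae_have 4 → 2 := fun h4 => h4.cliqueFree (by omega)
  tfae_have 2 → 1 := by
    intro h3
    by_contra hni
    push_neg at hni
    -- helper: a triangle contradicts CliqueFree 3
    have triangle : ∀ H K L : Subgroup G,
        H ≠ ⊥ → H ≠ ⊤ → K ≠ ⊥ → K ≠ ⊤ → L ≠ ⊥ → L ≠ ⊤ →
        H ≠ K → H ≠ L → K ≠ L →
        H ⊓ K ≠ ⊥ → H ⊓ L ≠ ⊥ → K ⊓ L ≠ ⊥ → False := by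
      intro H K L hHb hHt hKb hKt hLb hLt hHK hHL hKL iHK iHL iKL
      apply h3 {(⟨H, hHb, hHt⟩ : {H : Subgroup G // H ≠ ⊥ ∧ H ≠ ⊤}),
        ⟨K, hKb, hKt⟩, ⟨L, hLb, hLt⟩}
      rw [SimpleGraph.is3Clique_triple_iff]
      refine ⟨⟨fun he => hHK (congrArg Subtype.val he), iHK⟩,
        ⟨fun he => hHL (congrArg Subtype.val he), iHL⟩,
        ⟨fun he => hKL (congrArg Subtype.val he), iKL⟩⟩
    obtain ⟨p, a, b, hp, ha, hb, hba⟩ := exists_two_prime_elements h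
    have hpf : Fact p.Prime := ⟨hp⟩
    have hp1 := hp.one_lt
    set A := zpowers a with hA
    set B := zpowers b with hB
    set E := A ⊔ B with hE
    have hcardA : Nat.card A = p := by rw [hA, Nat.card_zpowers, ha]
    have hcardB : Nat.card B = p := by rw [hB, Nat.card_zpowers, hb]
    have hAB : A ⊓ B = ⊥ := disj_of_prime_not_mem hp ha hb hba
    have hcardE : Nat.card E = p * p := by
      rw [hE, card_sup_of_disjoint hAB, hcardA, hcardB]
    have ha1 : a ≠ 1 := by
      intro h1
      rw [h1, orderOf_one] at ha
      omega
    have hb1 : b ≠ 1 := by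
      intro h1
      rw [h1, orderOf_one] at hb
      omega
    have hA_ne_bot : A ≠ ⊥ := by rw [hA, Ne, Subgroup.zpowers_eq_bot]; exact ha1
    have hE_ne_bot : E ≠ ⊥ := by
      intro hEb
      exact hA_ne_bot (le_bot_iff.1 (hEb ▸ (le_sup_left : A ≤ E)))
    have hE_ne_top : E ≠ ⊤ := by
      intro hEt
      exact (hni p hp).false (isoZModProd hcardA hcardB hAB hEt)
    have hexx : ∃ x : G, x ∉ E := by
      by_contra hcon
      push_neg at hcon
      exact hE_ne_top ((Subgroup.eq_top_iff' E).2 hcon)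
    obtain ⟨x, hxE⟩ := hexx
    set C := zpowers x with hC
    have hx1 : x ≠ 1 := fun h1 => hxE (h1 ▸ E.one_mem)
    have hC_ne_bot : C ≠ ⊥ := by rw [hC, Ne, Subgroup.zpowers_eq_bot]; exact hx1
    have hC_ne_top : C ≠ ⊤ := by
      intro hCt
      exact h ⟨⟨x, fun g => (Subgroup.eq_top_iff' _).1 hCt g⟩⟩
    have hxC : x ∈ C := mem_zpowers x
    have haA : a ∈ A := mem_zpowers a
    have haE : a ∈ E := (le_sup_left : A ≤ E) haA
    by_cases hCE : C ⊓ E = ⊥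
    · -- C and E are disjoint
      have hCA : C ⊓ A = ⊥ := by
        apply le_bot_iff.1
        rw [← hCE]
        exact inf_le_inf_left C (le_sup_left : A ≤ E)
      by_cases hT : C ⊔ A = ⊤
      · -- G = C × A internally
        set d := Nat.card C with hd
        have hd_eq : d = orderOf x := by rw [hd, hC, Nat.card_zpowers]
        have hd_pos : 0 < d := by rw [hd_eq]; exact orderOf_pos x
        have hcardG : Nat.card G = d * p := by
          rw [← Subgroup.card_top (G := G), ← hT, card_sup_of_disjoint hCA,
            hcardA, hd]
        have hpd : p ∣ d := by
          by_contra hpd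
          have hcop : (Nat.Coprime (orderOf x) (orderOf a)) := by
            rw [ha, ← hd_eq]
            exact Nat.coprime_comm.1 (hp.coprime_iff_not_dvd.2 hpd)
          have hord : orderOf (x * a) = d * p := by
            rw [(Commute.all x a).orderOf_mul_eq_mul_orderOf_of_coprime hcop,
              ha, ← hd_eq]
          exact h (isCyclic_of_orderOf_eq_card (x * a) (by rw [hord, hcardG]))
        obtain ⟨y', hy'⟩ := exists_prime_orderOf_dvd_card' (G := ↥C) p
          (by rw [← hd]; exact hpd)
        set y := (y' : G) with hy
        have hyC : y ∈ C := y'.2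
        have hy_ord : orderOf y = p := by
          rw [hy, Subgroup.orderOf_coe]; exact hy'
        have hy1 : y ≠ 1 := by
          intro h1
          rw [h1, orderOf_one] at hy_ord
          omega
        have hYC : zpowers y ≤ C := zpowers_le.2 hyC
        have haY : a ∉ zpowers y := by
          intro hmem
          have hmem2 : a ∈ C ⊓ A := ⟨hYC hmem, haA⟩
          rw [hCA, Subgroup.mem_bot] at hmem2
          exact ha1 hmem2
        have hYA : zpowers y ⊓ A = ⊥ := disj_of_prime_not_mem hp hy_ord ha haY
        set E' := zpowers y ⊔ A with hE'
        have hcardY : Nat.card (zpowers y) = p := by rw [Nat.card_zpowers, hy_ord]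
        have hcardE' : Nat.card E' = p * p := by
          rw [hE', card_sup_of_disjoint hYA, hcardY, hcardA]
        have hd_ne_p : d ≠ p := by
          intro hdp
          have hCp : Nat.card C = p := by rw [← hd]; exact hdp
          exact (hni p hp).false (isoZModProd hCp hcardA hCA hT)
        have hd_ge : 2 * p ≤ d := by
          obtain ⟨t, ht⟩ := hpd
          have ht2 : 2 ≤ t := by
            rcases Nat.lt_or_ge t 2 with h1 | h1
            · interval_cases t <;> omega
            · exact h1
          calc 2 * p ≤ t * p := Nat.mul_le_mul_right p ht2
          _ = d := by rw [mul_comm, ← ht]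
        have hcardG_gt : p * p < Nat.card G := by
          rw [hcardG]
          have h1 : p * p < (2 * p) * p := by nlinarith
          have h2 : (2 * p) * p ≤ d * p := Nat.mul_le_mul_right p hd_ge
          omega
        -- triangle: zpowers y, E', C
        apply triangle (zpowers y) E' C
        · rw [Ne, Subgroup.zpowers_eq_bot]; exact hy1
        · intro htop
          have h1 : Nat.card (zpowers y) = Nat.card G :=
            (Subgroup.card_eq_iff_eq_top _).2 htop
          rw [hcardY] at h1
          nlinarith
        · intro hbot
          have h1 : zpowers y ≤ E' := le_sup_left
          rw [hbot, le_bot_iff, Subgroup.zpowers_eq_bot] at h1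
          exact hy1 h1
        · intro htop
          have h1 : Nat.card E' = Nat.card G :=
            (Subgroup.card_eq_iff_eq_top _).2 htop
          rw [hcardE'] at h1
          omega
        · exact hC_ne_bot
        · exact hC_ne_top
        · intro heq
          have h1 : Nat.card (zpowers y) = Nat.card E' := by rw [heq]
          rw [hcardY, hcardE'] at h1
          nlinarith
        · intro heq
          apply hd_ne_p
          rw [hd, ← heq, hcardY]
        · intro heq
          have hmem : a ∈ C := by
            rw [← heq]
            exact (le_sup_right : A ≤ E') haA
          have hmem2 : a ∈ C ⊓ A := ⟨hmem, haA⟩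
          rw [hCA, Subgroup.mem_bot] at hmem2
          exact ha1 hmem2
        · rw [inf_eq_left.2 (le_sup_left : zpowers y ≤ E'), Ne,
            Subgroup.zpowers_eq_bot]
          exact hy1
        · rw [inf_eq_left.2 hYC, Ne, Subgroup.zpowers_eq_bot]
          exact hy1
        · intro hbot
          have h1 : zpowers y ≤ E' ⊓ C := le_inf le_sup_left hYC
          rw [hbot, le_bot_iff, Subgroup.zpowers_eq_bot] at h1
          exact hy1 h1
      · -- triangle: A, E, C ⊔ A
        set T := C ⊔ A with hT'
        have hxT : x ∈ T := (le_sup_left : C ≤ T) hxC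
        apply triangle A E T
        · exact hA_ne_bot
        · intro htop
          exact h ⟨⟨a, fun g => (Subgroup.eq_top_iff' _).1 htop g⟩⟩
        · exact hE_ne_bot
        · exact hE_ne_top
        · intro hbot
          exact hA_ne_bot (le_bot_iff.1 (hbot ▸ (le_sup_right : A ≤ T)))
        · exact hT
        · intro heq
          have h1 : Nat.card A = Nat.card E := by rw [heq]
          rw [hcardA, hcardE] at h1
          nlinarith
        · intro heq
          have hxA : x ∈ A := by rw [heq]; exact hxT
          exact hxE ((le_sup_left : A ≤ E) hxA)
        · intro heq
          apply hxE
          rw [heq]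
          exact hxT
        · rw [inf_eq_left.2 (le_sup_left : A ≤ E)]
          exact hA_ne_bot
        · rw [inf_eq_left.2 (le_sup_right : A ≤ T)]
          exact hA_ne_bot
        · intro hbot
          have h1 : A ≤ E ⊓ T := le_inf le_sup_left le_sup_right
          rw [hbot, le_bot_iff] at h1
          exact hA_ne_bot h1
    · -- C ⊓ E ≠ ⊥ : triangle C ⊓ E, C, E
      apply triangle (C ⊓ E) C E
      · exact hCE
      · intro htop
        apply hC_ne_top
        apply top_le_iff.1
        rw [← htop]
        exact inf_le_left
      · exact hC_ne_bot
      · exact hC_ne_top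
      · exact hE_ne_bot
      · exact hE_ne_top
      · intro heq
        have hle : C ≤ E := by
          rw [← heq]; exact inf_le_right
        exact hxE (hle hxC)
      · intro heq
        have hEC : E ≤ C := by
          rw [← heq]; exact inf_le_left
        have hax : a ∈ zpowers x := hEC haE
        have hbx : b ∈ zpowers x := hEC ((le_sup_right : B ≤ E) (mem_zpowers b))
        exact hba (mem_zpowers_of_orderOf_eq hp ha hb hax hbx)
      · intro heq
        apply hxE
        rw [← heq]
        exact hxC
      · rw [inf_eq_left.2 (inf_le_left : C ⊓ E ≤ C)]
        exact hCE
      · rw [inf_eq_left.2 (inf_le_right : C ⊓ E ≤ E)]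
        exact hCE
      · exact hCE
  tfae_finish
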